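/- Let S = [[-1, δ],[0, 1]] and T = [[1, 0],[δ, -1]] be the 2×2 matrices over k giving the action of the two simple reflections of the dihedral realization on the span of the simple roots. Then for every m ≥ 1, (S·T)^m is the identity matrix if and only if [2m] = 0 and [2m−1] = −1 in k. -/

import Mathlib

/-- The quantum numbers `[n] ∈ k` attached to `δ ∈ k`:
`[0] = 0`, `[1] = 1`, `[n+1] = δ·[n] − [n−1]`. -/
def qn {k : Type*} [CommRing k] (δ : k) : ℕ → k
  | 0 => 0
  | 1 => 1
  | n + 2 => δ * qn δ (n + 1) - qn δ n

private lemma ST_pow_aux {k : Type*} [CommRing k] (δ : k) (n : ℕ) :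
    ((!![-1, δ; 0, 1] : Matrix (Fin 2) (Fin 2) k) * !![1, 0; δ, -1]) ^ (n + 1) =
      !![qn δ (2 * n + 3), -qn δ (2 * n + 2); qn δ (2 * n + 2), -qn δ (2 * n + 1)] := by
  induction n with
  | zero =>
    rw [pow_one, Matrix.mul_fin_two]
    norm_num
    refine ⟨⟨?_, ?_⟩, ?_, ?_⟩ <;> simp [qn] <;> ring
  | succ n ih =>
    rw [pow_succ, ih, Matrix.mul_fin_two]
    have h1 : 2 * (n + 1) + 3 = (2 * n + 3) + 2 := by ring
    have h2 : 2 * (n + 1) + 2 = (2 * n + 2) + 2 := by ring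
    have h3 : 2 * (n + 1) + 1 = (2 * n + 1) + 2 := by ring
    rw [h1, h2, h3]
    ext i j
    fin_cases i <;> fin_cases j <;>
      simp [qn, show (2 * n + 1) + 2 = 2 * n + 3 from by ring,
        show (2 * n) + 2 = 2 * n + 2 from by ring,
        show 2 * n + 2 + 1 = 2 * n + 3 from by ring] <;> ring

/-- For the symmetric dihedral realization with Cartan entries `a(s,t) = a(t,s) = −δ`,
acting on the span of the simple roots with matrices
`S = [[-1, δ],[0, 1]]` and `T = [[1, 0],[δ, -1]]`, and for every `m ≥ 1`:
`(S·T)^m` is the identity matrix if and only if `[2m] = 0` and `[2m−1] = −1` in `k`. -/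
theorem dihedral_ST_pow_eq_one_iff {k : Type*} [CommRing k] (δ : k) (m : ℕ) (hm : 1 ≤ m) :
    ((!![-1, δ; 0, 1] : Matrix (Fin 2) (Fin 2) k) * !![1, 0; δ, -1]) ^ m = 1 ↔
      (qn δ (2 * m) = 0 ∧ qn δ (2 * m - 1) = -1) := by
  obtain ⟨n, rfl⟩ : ∃ n, m = n + 1 := ⟨m - 1, (Nat.succ_pred_eq_of_pos hm).symm⟩
  rw [ST_pow_aux]
  have h2 : 2 * (n + 1) = 2 * n + 2 := by ring
  have h3 : 2 * n + 2 - 1 = 2 * n + 1 := by omega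
  rw [h2, h3]
  constructor
  · intro h
    have := congrArg (fun M : Matrix (Fin 2) (Fin 2) k => M 1 0) h
    have h2' := congrArg (fun M : Matrix (Fin 2) (Fin 2) k => M 1 1) h
    simp at this h2'
    exact ⟨this, by linear_combination -h2'⟩
  · rintro ⟨h1, h2'⟩
    have h3' : qn δ (2 * n + 3) = 1 := by
      have e : qn δ ((2 * n + 1) + 2) = δ * qn δ (2 * n + 2) - qn δ (2 * n + 1) := rfl
      rw [show 2 * n + 3 = (2 * n + 1) + 2 from rfl, e, h1, h2']; ring
    ext i j
    fin_cases i <;> fin_cases j <;> simp [h1, h2', h3']
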